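/- For every n > 1 and every pair k, k' ∈ {1, …, n−1}, there exists a digraph on n vertices whose out forest dimension equals k and whose in forest dimension equals k'. Moreover, for every digraph Γ on n vertices, the out forest dimension equals n if and only if the in forest dimension equals n, if and only if Γ has no arcs. -/
import Mathlib

/-- An out forest of the digraph with arc set `A`: a subset of the arcs with no
directed cycle in which every vertex has at most one incoming arc. -/
def IsOutForestOf {n : ℕ} (A F : Finset (Fin n × Fin n)) : Prop :=
  F ⊆ A ∧
  (∀ u u' v : Fin n, (u, v) ∈ F → (u', v) ∈ F → u = u') ∧
  ¬ ∃ (k : ℕ) (f : ℕ → Fin n), 0 < k ∧ f 0 = f k ∧ ∀ i < k, (f i, f (i + 1)) ∈ F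

/-- An in forest of the digraph with arc set `A`: a subset of the arcs with no
directed cycle in which every vertex has at most one outgoing arc. -/
def IsInForestOf {n : ℕ} (A F : Finset (Fin n × Fin n)) : Prop :=
  F ⊆ A ∧
  (∀ u v v' : Fin n, (u, v) ∈ F → (u, v') ∈ F → v = v') ∧
  ¬ ∃ (k : ℕ) (f : ℕ → Fin n), 0 < k ∧ f 0 = f k ∧ ∀ i < k, (f i, f (i + 1)) ∈ F

/-- The maximum number of arcs in an out forest of the digraph with arc set `A`. -/
noncomputable def maxOutForestCard {n : ℕ} (A : Finset (Fin n × Fin n)) : ℕ :=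
  sSup {k | ∃ F : Finset (Fin n × Fin n), IsOutForestOf A F ∧ F.card = k}

/-- The maximum number of arcs in an in forest of the digraph with arc set `A`. -/
noncomputable def maxInForestCard {n : ℕ} (A : Finset (Fin n × Fin n)) : ℕ :=
  sSup {k | ∃ F : Finset (Fin n × Fin n), IsInForestOf A F ∧ F.card = k}

/-- The out forest dimension `v`: `n − v` is the maximum number of arcs in an out forest. -/
noncomputable def outForestDim {n : ℕ} (A : Finset (Fin n × Fin n)) : ℕ :=
  n - maxOutForestCard A

/-- The in forest dimension `v'`: `n − v'` is the maximum number of arcs in an in forest. -/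
noncomputable def inForestDim {n : ℕ} (A : Finset (Fin n × Fin n)) : ℕ :=
  n - maxInForestCard A

lemma noCycle_of_rank {n : ℕ} (F : Finset (Fin n × Fin n)) (ρ : Fin n → ℕ)
    (h : ∀ p ∈ F, ρ p.1 < ρ p.2) :
    ¬ ∃ (k : ℕ) (f : ℕ → Fin n), 0 < k ∧ f 0 = f k ∧ ∀ i < k, (f i, f (i + 1)) ∈ F := by
  rintro ⟨k, f, hk, h0, hf⟩
  have key : ∀ i ≤ k, ρ (f 0) + i ≤ ρ (f i) := by
    intro i
    induction i with
    | zero => simp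
    | succ j ih =>
      intro hj
      have h1 := ih (Nat.le_of_succ_le hj)
      have h2 := h _ (hf j (Nat.lt_of_succ_le hj))
      simp only at h2
      omega
  have hfin := key k le_rfl
  rw [← h0] at hfin
  omega

lemma sSup_set_eq {S : Set ℕ} {a : ℕ} (h1 : a ∈ S) (h2 : ∀ m ∈ S, m ≤ a) : sSup S = a :=
  le_antisymm (csSup_le ⟨a, h1⟩ h2) (le_csSup ⟨a, fun m hm => h2 m hm⟩ h1)

lemma maxOut_eq {n : ℕ} {A : Finset (Fin n × Fin n)} {a : ℕ}
    (hw : ∃ F, IsOutForestOf A F ∧ F.card = a)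
    (hb : ∀ F, IsOutForestOf A F → F.card ≤ a) : maxOutForestCard A = a := by
  apply sSup_set_eq hw
  rintro m ⟨F, hF, rfl⟩
  exact hb F hF

lemma maxIn_eq {n : ℕ} {A : Finset (Fin n × Fin n)} {a : ℕ}
    (hw : ∃ F, IsInForestOf A F ∧ F.card = a)
    (hb : ∀ F, IsInForestOf A F → F.card ≤ a) : maxInForestCard A = a := by
  apply sSup_set_eq hw
  rintro m ⟨F, hF, rfl⟩
  exact hb F hF

/-- A single non-loop arc is both an out forest and an in forest. -/
lemma singleton_forest {n : ℕ} {A : Finset (Fin n × Fin n)} {p : Fin n × Fin n}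
    (hp : p ∈ A) (hne : p.1 ≠ p.2) :
    IsOutForestOf A {p} ∧ IsInForestOf A {p} := by
  have hsub : ({p} : Finset (Fin n × Fin n)) ⊆ A := by
    intro q hq; rw [Finset.mem_singleton] at hq; subst hq; exact hp
  have hcyc := noCycle_of_rank {p} (fun x => if x = p.2 then 1 else 0) (by
    intro q hq
    rw [Finset.mem_singleton] at hq; subst hq
    simp [hne])
  refine ⟨⟨hsub, ?_, hcyc⟩, ⟨hsub, ?_, hcyc⟩⟩
  · intro u u' v h1 h2
    rw [Finset.mem_singleton] at h1 h2
    rw [Prod.ext_iff] at h1 h2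
    simp only at h1 h2
    rw [h1.1, h2.1]
  · intro u v v' h1 h2
    rw [Finset.mem_singleton] at h1 h2
    rw [Prod.ext_iff] at h1 h2
    simp only at h1 h2
    rw [h1.2, h2.2]

lemma maxOut_empty {n : ℕ} : maxOutForestCard (∅ : Finset (Fin n × Fin n)) = 0 := by
  apply maxOut_eq
  · refine ⟨∅, ⟨le_refl _, ?_, ?_⟩, Finset.card_empty⟩
    · intro u u' v h1; exact absurd h1 (Finset.notMem_empty _)
    · rintro ⟨k, f, hk, h0, hf⟩
      exact absurd (hf 0 hk) (Finset.notMem_empty _)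
  · intro F hF
    have := Finset.card_le_card hF.1
    simpa using this

lemma maxIn_empty {n : ℕ} : maxInForestCard (∅ : Finset (Fin n × Fin n)) = 0 := by
  apply maxIn_eq
  · refine ⟨∅, ⟨le_refl _, ?_, ?_⟩, Finset.card_empty⟩
    · intro u u' v h1; exact absurd h1 (Finset.notMem_empty _)
    · rintro ⟨k, f, hk, h0, hf⟩
      exact absurd (hf 0 hk) (Finset.notMem_empty _)
  · intro F hF
    have := Finset.card_le_card hF.1
    simpa using this

lemma maxOut_pos {n : ℕ} {A : Finset (Fin n × Fin n)} (hA : ∀ p ∈ A, p.1 ≠ p.2)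
    (hne : A.Nonempty) : 1 ≤ maxOutForestCard A := by
  obtain ⟨p, hp⟩ := hne
  apply le_csSup
  · refine ⟨A.card, ?_⟩
    rintro m ⟨F, hF, rfl⟩
    exact Finset.card_le_card hF.1
  · exact ⟨{p}, (singleton_forest hp (hA p hp)).1, Finset.card_singleton p⟩

lemma maxIn_pos {n : ℕ} {A : Finset (Fin n × Fin n)} (hA : ∀ p ∈ A, p.1 ≠ p.2)
    (hne : A.Nonempty) : 1 ≤ maxInForestCard A := by
  obtain ⟨p, hp⟩ := hne
  apply le_csSup
  · refine ⟨A.card, ?_⟩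
    rintro m ⟨F, hF, rfl⟩
    exact Finset.card_le_card hF.1
  · exact ⟨{p}, (singleton_forest hp (hA p hp)).2, Finset.card_singleton p⟩

/-- for every `k, k' ∈ {1, …, n−1}` there is a digraph on `n` vertices
with out forest dimension `k` and in forest dimension `k'`; moreover the out forest
dimension equals `n` iff the in forest dimension equals `n`, iff there are no arcs. -/
theorem forest_dimensions_of_digraphs (n : ℕ) (hn : 1 < n) :
    (∀ k k' : ℕ, 1 ≤ k → k ≤ n - 1 → 1 ≤ k' → k' ≤ n - 1 →
      ∃ A : Finset (Fin n × Fin n), (∀ p ∈ A, p.1 ≠ p.2) ∧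
        outForestDim A = k ∧ inForestDim A = k') ∧
    (∀ A : Finset (Fin n × Fin n), (∀ p ∈ A, p.1 ≠ p.2) →
      ((outForestDim A = n ↔ inForestDim A = n) ∧
       (outForestDim A = n ↔ A = ∅))) := by
  constructor
  · intro k k' hk1 hk2 hk'1 hk'2
    set a := n - k with ha
    set b := n - k' with hb
    have ha1 : 1 ≤ a := by omega
    have ha2 : a ≤ n - 1 := by omega
    have hb1 : 1 ≤ b := by omega
    have hb2 : b ≤ n - 1 := by omega
    have hs : (0 : ℕ) < n := by omega
    have ht : n - 1 < n := by omega
    set s : Fin n := ⟨0, hs⟩ with hsdef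
    set t : Fin n := ⟨n - 1, ht⟩ with htdef
    set I : Finset (Fin n) :=
      (Finset.Ico (n - a) n).attachFin (fun m hm => (Finset.mem_Ico.mp hm).2) with hIdef
    set J : Finset (Fin n) :=
      (Finset.range b).attachFin
        (fun m hm => lt_of_lt_of_le (Finset.mem_range.mp hm) (by omega)) with hJdef
    have hmemI : ∀ v : Fin n, v ∈ I ↔ n - a ≤ (v : ℕ) := by
      intro v
      rw [hIdef, Finset.mem_attachFin, Finset.mem_Ico]
      exact ⟨fun h => h.1, fun h => ⟨h, v.2⟩⟩
    have hmemJ : ∀ v : Fin n, v ∈ J ↔ (v : ℕ) < b := by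
      intro v
      rw [hJdef, Finset.mem_attachFin, Finset.mem_range]
    have hIcard : I.card = a := by
      rw [hIdef, Finset.card_attachFin, Nat.card_Ico]
      omega
    have hJcard : J.card = b := by
      rw [hJdef, Finset.card_attachFin, Finset.card_range]
    set Fout : Finset (Fin n × Fin n) := I.image (fun v => (s, v)) with hFoutdef
    set Fin' : Finset (Fin n × Fin n) := J.image (fun u => (u, t)) with hFindef
    set A : Finset (Fin n × Fin n) := Fout ∪ Fin' with hAdef
    have hmemA : ∀ p : Fin n × Fin n, p ∈ A ↔
        ((p.1 = s ∧ p.2 ∈ I) ∨ (p.1 ∈ J ∧ p.2 = t)) := by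
      intro p
      rw [hAdef, Finset.mem_union, hFoutdef, hFindef, Finset.mem_image, Finset.mem_image]
      constructor
      · rintro (⟨v, hv, rfl⟩ | ⟨u, hu, rfl⟩)
        · exact Or.inl ⟨rfl, hv⟩
        · exact Or.inr ⟨hu, rfl⟩
      · rintro (⟨h1, h2⟩ | ⟨h1, h2⟩)
        · exact Or.inl ⟨p.2, h2, by rw [← h1]⟩
        · exact Or.inr ⟨p.1, h1, by rw [← h2]⟩
    have hIs : ∀ v : Fin n, v ∈ I → v ≠ s := by
      intro v hv
      rw [hmemI] at hv
      intro h
      rw [h, hsdef] at hv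
      simp at hv
      omega
    have hJt : ∀ v : Fin n, v ∈ J → v ≠ t := by
      intro v hv
      rw [hmemJ] at hv
      intro h
      rw [h, htdef] at hv
      simp at hv
      omega
    have hnoloop : ∀ p ∈ A, p.1 ≠ p.2 := by
      intro p hp
      rw [hmemA] at hp
      rcases hp with ⟨h1, h2⟩ | ⟨h1, h2⟩
      · intro h; exact hIs p.2 h2 (by rw [← h, h1])
      · intro h; exact hJt p.1 h1 (by rw [h, h2])
    have htI : t ∈ I := by rw [hmemI, htdef]; simp; omega
    have hsJ : s ∈ J := by rw [hmemJ, hsdef]; simp; omega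
    refine ⟨A, hnoloop, ?_, ?_⟩
    · -- outForestDim A = k
      have hmax : maxOutForestCard A = a := by
        apply maxOut_eq
        · refine ⟨Fout, ⟨Finset.subset_union_left, ?_, ?_⟩, ?_⟩
          · intro u u' v h1 h2
            rw [hFoutdef, Finset.mem_image] at h1 h2
            obtain ⟨x, _, hx⟩ := h1
            obtain ⟨y, _, hy⟩ := h2
            simp only [Prod.mk.injEq] at hx hy
            rw [← hx.1, ← hy.1]
          · apply noCycle_of_rank _ (fun x => if x = s then 0 else 1)
            intro p hp
            rw [hFoutdef, Finset.mem_image] at hp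
            obtain ⟨x, hxI, hx⟩ := hp
            rw [← hx]
            simp [hIs x hxI]
          · rw [hFoutdef, Finset.card_image_of_injective _ (fun x y h => (Prod.ext_iff.mp h).2),
              hIcard]
        · intro F hF
          obtain ⟨hFA, hdeg, _⟩ := hF
          have hinj : Set.InjOn Prod.snd (↑F : Set (Fin n × Fin n)) := by
            intro x hx y hy hxy
            have := hdeg x.1 y.1 x.2 (by simpa using hx) (by rw [hxy]; simpa using hy)
            exact Prod.ext this hxy
          rw [← Finset.card_image_of_injOn hinj]
          apply le_trans (Finset.card_le_card (t := I) ?_)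
          · rw [hIcard]
          · intro v hv
            rw [Finset.mem_image] at hv
            obtain ⟨p, hp, rfl⟩ := hv
            have := hFA hp
            rw [hmemA] at this
            rcases this with ⟨_, h2⟩ | ⟨_, h2⟩
            · exact h2
            · rw [h2]; exact htI
      rw [outForestDim, hmax]; omega
    · -- inForestDim A = k'
      have hmax : maxInForestCard A = b := by
        apply maxIn_eq
        · refine ⟨Fin', ⟨Finset.subset_union_right, ?_, ?_⟩, ?_⟩
          · intro u v v' h1 h2
            rw [hFindef, Finset.mem_image] at h1 h2
            obtain ⟨x, _, hx⟩ := h1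
            obtain ⟨y, _, hy⟩ := h2
            simp only [Prod.mk.injEq] at hx hy
            rw [← hx.2, ← hy.2]
          · apply noCycle_of_rank _ (fun x => if x = t then 1 else 0)
            intro p hp
            rw [hFindef, Finset.mem_image] at hp
            obtain ⟨x, hxJ, hx⟩ := hp
            rw [← hx]
            simp [hJt x hxJ]
          · rw [hFindef, Finset.card_image_of_injective _ (fun x y h => (Prod.ext_iff.mp h).1),
              hJcard]
        · intro F hF
          obtain ⟨hFA, hdeg, _⟩ := hF
          have hinj : Set.InjOn Prod.fst (↑F : Set (Fin n × Fin n)) := by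
            intro x hx y hy hxy
            have := hdeg x.1 x.2 y.2 (by simpa using hx) (by rw [hxy]; simpa using hy)
            exact Prod.ext hxy this
          rw [← Finset.card_image_of_injOn hinj]
          apply le_trans (Finset.card_le_card (t := J) ?_)
          · rw [hJcard]
          · intro v hv
            rw [Finset.mem_image] at hv
            obtain ⟨p, hp, rfl⟩ := hv
            have := hFA hp
            rw [hmemA] at this
            rcases this with ⟨h1, _⟩ | ⟨h1, _⟩
            · rw [h1]; exact hsJ
            · exact h1
      rw [inForestDim, hmax]; omega
  · intro A hA
    have hout : outForestDim A = n ↔ A = ∅ := by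
      constructor
      · intro h
        by_contra hne
        have := maxOut_pos hA (Finset.nonempty_iff_ne_empty.mpr hne)
        rw [outForestDim] at h
        omega
      · rintro rfl
        rw [outForestDim, maxOut_empty]; omega
    have hin : inForestDim A = n ↔ A = ∅ := by
      constructor
      · intro h
        by_contra hne
        have := maxIn_pos hA (Finset.nonempty_iff_ne_empty.mpr hne)
        rw [inForestDim] at h
        omega
      · rintro rfl
        rw [inForestDim, maxIn_empty]; omega
    exact ⟨hout.trans hin.symm, hout⟩
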